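/- For all integers 0 ≤ k ≤ n, the number of nondecreasing parking functions of length n+1 containing exactly n−k+1 entries equal to 1 is C_{n,k}. -/
import Mathlib

/-- Catalan's triangle: `C_{n,k} = ((n-k+1)/(n+1)) * binom(n+k, n)` (the division is exact). -/
def catalanTriangle (n k : ℕ) : ℕ := (n - k + 1) * (n + k).choose n / (n + 1)

/-- A nondecreasing parking function of length `m`, written as a monotone function
`a : Fin m → ℕ` of positive integers with `a i ≤ i + 1` (1-based: `a_i ≤ i`). -/
def IsNDParkingFunction (m : ℕ) (a : Fin m → ℕ) : Prop :=
  Monotone a ∧ (∀ i, 1 ≤ a i) ∧ ∀ i : Fin m, a i ≤ (i : ℕ) + 1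


-- Q-subtype machinery
abbrev Qty (d k : ℕ) := {c : Fin k → ℕ // Monotone c ∧ ∀ j : Fin k, c j ≤ d + j}

noncomputable def Q (d k : ℕ) : ℕ := Nat.card (Qty d k)

instance qfin (d k : ℕ) : Finite (Qty d k) := by
  apply Finite.of_injective
    (fun c : Qty d k => (fun j => (⟨c.1 j, by have := c.2.2 j; have := j.isLt; omega⟩ : Fin (d+k+1)) : Fin k → Fin (d+k+1)))
  intro c c' h
  apply Subtype.ext; funext j
  exact congrArg Fin.val (congrFun h j)

lemma Q_zero (d : ℕ) : Q d 0 = 1 := by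
  have : Unique (Qty d 0) := by
    refine ⟨⟨⟨fun j => j.elim0, fun i => i.elim0, fun j => j.elim0⟩⟩, ?_⟩
    intro c; apply Subtype.ext; funext j; exact j.elim0
  exact Nat.card_unique

lemma Q_one (d : ℕ) : Q d 1 = d + 1 := by
  have e : Qty d 1 ≃ Fin (d + 1) := by
    refine ⟨fun c => ⟨c.1 0, by have := c.2.2 0; omega⟩,
      fun i => ⟨fun _ => i.val, fun a b _ => le_refl _, fun j => by have := i.isLt; simp; omega⟩,
      ?_, ?_⟩
    · intro c; apply Subtype.ext; funext j
      have : j = 0 := Subsingleton.elim _ _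
      rw [this]
    · intro i; rfl
  rw [Q, Nat.card_congr e, Nat.card_eq_fintype_card, Fintype.card_fin]



def qconsFun (k : ℕ) (f : Fin k → ℕ) : Fin (k+1) → ℕ :=
  fun i => if h : i.val = 0 then 0 else f ⟨i.val - 1, by have := i.isLt; omega⟩

def qtailFun (k : ℕ) (f : Fin (k+1) → ℕ) : Fin k → ℕ := fun j => f j.succ

lemma qconsFun_qtailFun {k : ℕ} (f : Fin (k+1) → ℕ) (h : f 0 = 0) :
    qconsFun k (qtailFun k f) = f := by
  funext i
  unfold qconsFun qtailFun
  by_cases hi : i.val = 0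
  · rw [dif_pos hi]
    have : i = 0 := Fin.ext hi
    rw [this, h]
  · rw [dif_neg hi]
    apply congrArg f
    apply Fin.ext
    simp only [Fin.val_succ]
    omega

lemma qtailFun_qconsFun {k : ℕ} (f : Fin k → ℕ) : qtailFun k (qconsFun k f) = f := by
  funext j
  unfold qconsFun qtailFun
  have hs : ¬ (j.succ : Fin (k+1)).val = 0 := by simp [Fin.val_succ]
  simp only [hs, dite_false]
  apply congrArg f
  apply Fin.ext
  simp [Fin.val_succ]

lemma qconsFun_zero {k : ℕ} (f : Fin k → ℕ) : qconsFun k f 0 = 0 := by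
  simp [qconsFun]

/-- prepend a `0` to a sequence -/
def qcons (d k : ℕ) (c : Qty (d+1) k) : Qty d (k+1) := by
  refine ⟨qconsFun k c.1, ?_, ?_⟩
  · intro i j hij
    have hij' : i.val ≤ j.val := hij
    unfold qconsFun
    by_cases hi : i.val = 0
    · by_cases hj : j.val = 0 <;> simp [hi, hj]
    · have hj : ¬ j.val = 0 := by omega
      simp only [hi, hj, dite_false]
      exact c.2.1 (by simp [Fin.mk_le_mk]; omega)
  · intro i
    unfold qconsFun
    by_cases hi : i.val = 0
    · simp [hi]
    · simp only [hi, dite_false]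
      have := c.2.2 ⟨i.val - 1, by have := i.isLt; omega⟩
      simp only at this
      have := i.isLt
      omega

/-- drop the leading entry -/
def qtail (d e k : ℕ) (hde : d + 1 ≤ e) (c : Qty d (k+1)) : Qty e k := by
  refine ⟨qtailFun k c.1, ?_, ?_⟩
  · intro i j hij
    exact c.2.1 (by rw [Fin.le_def]; simp only [Fin.val_succ]; exact Nat.add_le_add_right hij 1)
  · intro j
    show c.1 j.succ ≤ e + j
    have := c.2.2 j.succ
    simp only [Fin.val_succ] at this
    omega

def Q_step (d k : ℕ) : Qty (d+1) (k+1) ≃ (Qty (d+2) k ⊕ Qty d (k+1)) where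
  toFun c :=
    if h : c.1 0 = 0 then Sum.inl (qtail (d+1) (d+2) k (by omega) c)
    else Sum.inr ⟨fun j => c.1 j - 1,
        fun i j hij => by have := c.2.1 hij; simp only; omega,
        fun j => by have := c.2.2 j; simp only; omega⟩
  invFun s :=
    match s with
    | Sum.inl c => qcons (d+1) k c
    | Sum.inr c => ⟨fun j => c.1 j + 1,
        fun i j hij => by have := c.2.1 hij; simp only; omega,
        fun j => by have := c.2.2 j; simp only; omega⟩
  left_inv c := by
    dsimp only
    by_cases h : c.1 0 = 0
    · rw [dif_pos h]
      exact Subtype.ext (qconsFun_qtailFun c.1 h)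
    · rw [dif_neg h]
      apply Subtype.ext; funext i
      show c.1 i - 1 + 1 = c.1 i
      have := c.2.1 (Fin.zero_le i)
      omega
  right_inv s := by
    cases s with
    | inl c =>
      dsimp only
      have h0 : (qcons (d+1) k c).1 0 = 0 := qconsFun_zero c.1
      rw [dif_pos h0]
      exact congrArg Sum.inl (Subtype.ext (qtailFun_qconsFun c.1))
    | inr c =>
      dsimp only
      rw [dif_neg (by show ¬ (c.1 0 + 1 = 0); omega)]
      apply congrArg Sum.inr
      apply Subtype.ext; funext j
      show c.1 j + 1 - 1 = c.1 j
      omega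

def Q_base (k : ℕ) : Qty 0 (k+1) ≃ Qty 1 k where
  toFun c := qtail 0 1 k (le_refl _) c
  invFun c := qcons 0 k c
  left_inv c := by
    have h : c.1 0 = 0 := by have := c.2.2 0; simpa using this
    exact Subtype.ext (qconsFun_qtailFun c.1 h)
  right_inv c := Subtype.ext (qtailFun_qconsFun c.1)

lemma Q_step' (d k : ℕ) : Q (d+1) (k+1) = Q (d+2) k + Q d (k+1) := by
  rw [Q, Nat.card_congr (Q_step d k), Nat.card_sum]; rfl

lemma Q_base' (k : ℕ) : Q 0 (k+1) = Q 1 k := Nat.card_congr (Q_base k)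

lemma Q_eq : ∀ k d, Q d (k+1) + (d+2*k+2).choose k = (d+2*k+2).choose (k+1) := by
  intro k
  induction k with
  | zero =>
    intro d
    simp [Q_one, Nat.choose_one_right]
  | succ k ih =>
    intro d
    induction d with
    | zero =>
      show Q 0 (k+2) + (0+2*(k+1)+2).choose (k+1) = (0+2*(k+1)+2).choose (k+2)
      rw [Q_base']
      have h1 : Q 1 (k+1) + (2*k+3).choose k = (2*k+3).choose (k+1) := by
        have := ih 1
        have e : 1+2*k+2 = 2*k+3 := by ring
        rwa [e] at this
      have hsym : (2*k+3).choose (k+1) = (2*k+3).choose (k+2) := by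
        have e : 2*k+3-(k+2) = k+1 := by omega
        rw [← Nat.choose_symm (by omega : k+2 ≤ 2*k+3), e]
      have p1 : (2*k+4).choose (k+1) = (2*k+3).choose k + (2*k+3).choose (k+1) := by
        have e : 2*k+4 = (2*k+3)+1 := by ring
        rw [e, Nat.choose_succ_succ]
      have p2 : (2*k+4).choose (k+2) = (2*k+3).choose (k+1) + (2*k+3).choose (k+2) := by
        have e : 2*k+4 = (2*k+3)+1 := by ring
        rw [e, Nat.choose_succ_succ]
      have e1 : 0+2*(k+1)+2 = 2*k+4 := by ring
      rw [e1]
      omega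
    | succ d ihd =>
      show Q (d+1) (k+2) + (d+1+2*(k+1)+2).choose (k+1) = (d+1+2*(k+1)+2).choose (k+2)
      rw [Q_step']
      have eq0 : Q d (k+1+1) = Q d (k+2) := rfl
      rw [eq0]
      have h1 : Q (d+2) (k+1) + (d+2*k+4).choose k = (d+2*k+4).choose (k+1) := by
        have := ih (d+2)
        have e : d+2+2*k+2 = d+2*k+4 := by ring
        rwa [e] at this
      have h2 : Q d (k+2) + (d+2*k+4).choose (k+1) = (d+2*k+4).choose (k+2) := by
        have := ihd
        have e : d+2*(k+1)+2 = d+2*k+4 := by ring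
        rwa [e] at this
      have p1 : (d+2*k+5).choose (k+1) = (d+2*k+4).choose k + (d+2*k+4).choose (k+1) := by
        have e : d+2*k+5 = (d+2*k+4)+1 := by ring
        rw [e, Nat.choose_succ_succ]
      have p2 : (d+2*k+5).choose (k+2) = (d+2*k+4).choose (k+1) + (d+2*k+4).choose (k+2) := by
        have e : d+2*k+5 = (d+2*k+4)+1 := by ring
        rw [e, Nat.choose_succ_succ]
      have e1 : d+1+2*(k+1)+2 = d+2*k+5 := by ring
      rw [e1]
      omega

lemma myCatalanZero (n : ℕ) : catalanTriangle n 0 = 1 := by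
  unfold catalanTriangle
  simp [Nat.choose_self]

lemma catalan_eq (d k : ℕ) :
    catalanTriangle (d+k+1) (k+1) = (d+2*k+2).choose (k+1) - (d+2*k+2).choose k := by
  unfold catalanTriangle
  have e1 : d+k+1-(k+1)+1 = d+1 := by omega
  have e2 : d+k+1+(k+1) = d+2*k+2 := by ring
  rw [e1, e2]
  set A := (d+2*k+2).choose (k+1) with hA
  set B := (d+2*k+2).choose k with hB
  have hkey : A * (k+1) = B * (d+k+2) := by
    have := Nat.choose_succ_right_eq (d+2*k+2) k
    have e : d+2*k+2-k = d+k+2 := by omega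
    rw [e] at this
    exact this
  have hsymm : (d+2*k+2).choose (d+k+1) = A := by
    rw [hA, ← Nat.choose_symm (by omega : k+1 ≤ d+2*k+2)]
    congr 1
    omega
  rw [hsymm]
  have hBA : B ≤ A := by
    have h1 : B * (d+k+2) ≤ A * (d+k+2) := by
      rw [← hkey]
      exact Nat.mul_le_mul_left A (by omega)
    exact Nat.le_of_mul_le_mul_right h1 (by omega)
  apply Nat.div_eq_of_eq_mul_left (by omega : 0 < d+k+1+1)
  have : d+k+1+1 = d+k+2 := rfl
  rw [this]
  rw [Nat.sub_mul]
  rw [← hkey]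
  have : A * (d+k+2) - A * (k+1) = A * (d+1) := by
    rw [← Nat.mul_sub]
    congr 1
    omega
  rw [this]
  ring

lemma ones_iff {m t : ℕ} {a : Fin m → ℕ} (h : IsNDParkingFunction m a)
    (hc : (Finset.univ.filter fun i => a i = 1).card = t) (i : Fin m) :
    a i = 1 ↔ i.val < t := by
  obtain ⟨hmono, hpos, _⟩ := h
  constructor
  · intro h1
    have hsub : Finset.Iic i ⊆ Finset.univ.filter fun j => a j = 1 := by
      intro j hj
      simp only [Finset.mem_Iic] at hj
      simp only [Finset.mem_filter, Finset.mem_univ, true_and]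
      have h2 := hmono hj
      have h3 := hpos j
      omega
    have := Finset.card_le_card hsub
    rw [hc, Fin.card_Iic] at this
    omega
  · intro hit
    by_contra h1
    have hsub : (Finset.univ.filter fun j => a j = 1) ⊆ Finset.Iio i := by
      intro j hj
      simp only [Finset.mem_filter, Finset.mem_univ, true_and] at hj
      rw [Finset.mem_Iio]
      by_contra hji
      push_neg at hji
      have h2 := hmono hji
      have h3 := hpos i
      omega
    have := Finset.card_le_card hsub
    rw [hc, Fin.card_Iio] at this
    omega

lemma card_le_filter {m d : ℕ} (hd : d < m) :
    (Finset.univ.filter fun i : Fin m => i.val ≤ d).card = d + 1 := by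
  have : (Finset.univ.filter fun i : Fin m => i.val ≤ d) = Finset.Iic ⟨d, hd⟩ := by
    ext j
    simp [Finset.mem_Iic, Fin.le_def]
  rw [this, Fin.card_Iic]

def mainEquiv (d k : ℕ) :
    {a : Fin (d + k + 1) → ℕ // IsNDParkingFunction (d + k + 1) a ∧
      (Finset.univ.filter fun i : Fin (d + k + 1) => a i = 1).card = d + 1} ≃ Qty d k where
  toFun a := by
    refine ⟨fun j => a.1 ⟨d + 1 + j.val, by have := j.isLt; omega⟩ - 2, ?_, ?_⟩
    · intro i j hij
      have hij' : i.val ≤ j.val := hij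
      have := a.2.1.1 (show (⟨d + 1 + i.val, by have := i.isLt; omega⟩ : Fin (d+k+1)) ≤
        ⟨d + 1 + j.val, by have := j.isLt; omega⟩ from by rw [Fin.mk_le_mk]; omega)
      simp only
      omega
    · intro j
      have := a.2.1.2.2 ⟨d + 1 + j.val, by have := j.isLt; omega⟩
      simp only at this ⊢
      omega
  invFun c := by
    refine ⟨fun i => if h : i.val ≤ d then 1 else c.1 ⟨i.val - (d+1), by have := i.isLt; omega⟩ + 2,
      ⟨?_, ?_, ?_⟩, ?_⟩
    · intro i j hij
      have hij' : i.val ≤ j.val := hij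
      by_cases hi : i.val ≤ d
      · by_cases hj : j.val ≤ d
        · simp [hi, hj]
        · simp only [hi, hj, dite_true, dite_false]
          omega
      · have hj : ¬ j.val ≤ d := by omega
        simp only [hi, hj, dite_false]
        have := c.2.1 (show (⟨i.val - (d+1), by have := i.isLt; omega⟩ : Fin k) ≤
          ⟨j.val - (d+1), by have := j.isLt; omega⟩ from by rw [Fin.mk_le_mk]; omega)
        omega
    · intro i
      by_cases hi : i.val ≤ d <;> simp [hi]
    · intro i
      by_cases hi : i.val ≤ d
      · simp only [hi, dite_true]
        omega
      · simp only [hi, dite_false]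
        have := c.2.2 ⟨i.val - (d+1), by have := i.isLt; omega⟩
        simp only at this
        omega
    · have : (Finset.univ.filter fun i : Fin (d+k+1) =>
          (if h : i.val ≤ d then 1 else c.1 ⟨i.val - (d+1), by have := i.isLt; omega⟩ + 2) = 1)
          = Finset.univ.filter fun i : Fin (d+k+1) => i.val ≤ d := by
        ext i
        simp only [Finset.mem_filter, Finset.mem_univ, true_and]
        by_cases hi : i.val ≤ d
        · simp [hi]
        · simp only [hi, dite_false, iff_false]
          omega
      rw [this, card_le_filter (by omega)]
  left_inv a := by
    apply Subtype.ext; funext i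
    have hones := ones_iff a.2.1 a.2.2 
    by_cases hi : i.val ≤ d
    · show (if h : i.val ≤ d then 1 else _) = a.1 i
      rw [dif_pos hi]
      exact ((hones i).mpr (by omega)).symm
    · show (if h : i.val ≤ d then 1 else
        a.1 ⟨d + 1 + (i.val - (d+1)), by have := i.isLt; omega⟩ - 2 + 2) = a.1 i
      rw [dif_neg hi]
      have hidx : (⟨d + 1 + (i.val - (d+1)), by have := i.isLt; omega⟩ : Fin (d+k+1)) = i :=
        Fin.ext (by simp only; omega)
      rw [hidx]
      have h2 : ¬ (a.1 i = 1) := by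
        rw [hones i]
        omega
      have h3 := a.2.1.2.1 i
      omega
  right_inv c := by
    apply Subtype.ext; funext j
    show (if h : (d + 1 + j.val : ℕ) ≤ d then 1
        else c.1 ⟨d + 1 + j.val - (d+1), by have := j.isLt; omega⟩ + 2) - 2 = c.1 j
    rw [dif_neg (by omega)]
    have hidx : (⟨d + 1 + j.val - (d+1), by have := j.isLt; omega⟩ : Fin k) = j :=
      Fin.ext (by simp only; omega)
    rw [hidx]
    omega

lemma card_main (d k : ℕ) :
    Nat.card {a : Fin (d + k + 1) → ℕ // IsNDParkingFunction (d + k + 1) a ∧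
      (Finset.univ.filter fun i : Fin (d + k + 1) => a i = 1).card = d + 1} = Q d k :=
  Nat.card_congr (mainEquiv d k)

/-- The number of nondecreasing parking functions of length `n+1` containing exactly
`n - k + 1` entries equal to `1` is `C_{n,k}`. -/
theorem card_ndpf_ones (n k : ℕ) (hk : k ≤ n) :
    Nat.card {a : Fin (n + 1) → ℕ // IsNDParkingFunction (n + 1) a ∧
        (Finset.univ.filter fun i : Fin (n + 1) => a i = 1).card = n - k + 1}
      = catalanTriangle n k := by
  obtain ⟨d, rfl⟩ : ∃ d, n = d + k := ⟨n - k, by omega⟩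
  simp only [Nat.add_sub_cancel]
  rw [card_main d k]
  cases k with
  | zero => rw [Q_zero, myCatalanZero]
  | succ k =>
    have h1 := Q_eq k d
    have h2 := catalan_eq d k
    have e2 : d + (k + 1) = d + k + 1 := by ring
    rw [e2]
    omega
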